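/- arXiv:0903.2836 — 2 statements merged into one kernel-verified Lean document; each statement's English description precedes it below -/
import Mathlib

section
/- Let K₁ = {(x, y, z) ∈ ℝ³ : x² + y² ≤ z} and K₂ = {(x, y, z) ∈ ℝ³ : 2x² + y² ≤ z}. Then for every 2-dimensional plane L ⊂ ℝ³, the orthogonal projections π_L(K₁) and π_L(K₂) are positively homothetic: there exist a point w ∈ L's ambient space and a scalar λ > 0 with π_L(K₁) = w + λ·π_L(K₂). -/
/-- The orthogonal projection of `ℝⁿ` onto the plane `p + L`. -/
noncomputable def planeProj {n : ℕ} (p : EuclideanSpace ℝ (Fin n))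
    (L : Submodule ℝ (EuclideanSpace ℝ (Fin n))) (x : EuclideanSpace ℝ (Fin n)) :
    EuclideanSpace ℝ (Fin n) :=
  p + (L.orthogonalProjection (x - p) : EuclideanSpace ℝ (Fin n))

lemma Tident (u0 u1 u2 : ℝ) (hA : 0 < 2*u0^2 + u1^2) :
    ∃ l f1 f2 v1 v2 v3 s : ℝ, 0 < l ∧ s ≠ 0 ∧ l + (f1*u0 + f2*u1) = s ∧
      ∀ x0 x1 x2 : ℝ,
        (l*x0 + (f1*x0+f2*x1)*u0 + v1)^2 + (l*x1 + (f1*x0+f2*x1)*u1 + v2)^2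
          - (l*x2 + (f1*x0+f2*x1)*u2 + v3)
          = l * (2*x0^2 + x1^2 - x2) := by
  obtain ⟨s, hs, hspos⟩ : ∃ s : ℝ, s^2 = 2 ∧ 0 < s :=
    ⟨Real.sqrt 2, Real.sq_sqrt (by norm_num), Real.sqrt_pos.mpr (by norm_num)⟩
  have hAne : 2*u0^2 + u1^2 ≠ 0 := ne_of_gt hA
  have hsne : s ≠ 0 := ne_of_gt hspos
  have hr : 0 < u0^2 + u1^2 := by nlinarith
  refine ⟨2*(u0^2+u1^2)/(2*u0^2+u1^2), 2*(s-1)*u0/(2*u0^2+u1^2), (s-2)*u1/(2*u0^2+u1^2),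
    u2*(2*(s-1)*u0/(2*u0^2+u1^2))/(2*s), u2*((s-2)*u1/(2*u0^2+u1^2))/(2*s),
    (u2*(2*(s-1)*u0/(2*u0^2+u1^2))/(2*s))^2 + (u2*((s-2)*u1/(2*u0^2+u1^2))/(2*s))^2,
    s, div_pos (by linarith) hA, hsne, ?_, ?_⟩
  · field_simp
    ring
  · intro x0 x1 x2
    have h1 : (2*(u0^2+u1^2)/(2*u0^2+u1^2)
        + (2*(s-1)*u0/(2*u0^2+u1^2))*u0)^2 + ((2*(s-1)*u0/(2*u0^2+u1^2))*u1)^2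
        = 2*(2*(u0^2+u1^2)/(2*u0^2+u1^2)) := by
      field_simp
      linear_combination (u0^4 + u0^2*u1^2) * hs
    have h2 : ((s-2)*u1/(2*u0^2+u1^2)*u0)^2
        + (2*(u0^2+u1^2)/(2*u0^2+u1^2) + ((s-2)*u1/(2*u0^2+u1^2))*u1)^2
        = 2*(u0^2+u1^2)/(2*u0^2+u1^2) := by
      field_simp
      linear_combination (u1^2*u0^2 + u1^4) * hs
    have h3 : (2*(u0^2+u1^2)/(2*u0^2+u1^2))*((s-2)*u1/(2*u0^2+u1^2)*u0
          + (2*(s-1)*u0/(2*u0^2+u1^2))*u1)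
        + (2*(s-1)*u0/(2*u0^2+u1^2))*((s-2)*u1/(2*u0^2+u1^2))*(u0^2+u1^2) = 0 := by
      field_simp
      linear_combination (2*u0*u1*(u0^2+u1^2)) * hs
    have h4 : 2*(u2*(2*(s-1)*u0/(2*u0^2+u1^2))/(2*s))*(2*(u0^2+u1^2)/(2*u0^2+u1^2)
          + (2*(s-1)*u0/(2*u0^2+u1^2))*u0)
        + 2*(u2*((s-2)*u1/(2*u0^2+u1^2))/(2*s))*((2*(s-1)*u0/(2*u0^2+u1^2))*u1)
        = (2*(s-1)*u0/(2*u0^2+u1^2))*u2 := by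
      field_simp
      ring
    have h5 : 2*(u2*(2*(s-1)*u0/(2*u0^2+u1^2))/(2*s))*((s-2)*u1/(2*u0^2+u1^2)*u0)
        + 2*(u2*((s-2)*u1/(2*u0^2+u1^2))/(2*s))*(2*(u0^2+u1^2)/(2*u0^2+u1^2)
          + ((s-2)*u1/(2*u0^2+u1^2))*u1)
        = ((s-2)*u1/(2*u0^2+u1^2))*u2 := by
      field_simp
      ring
    linear_combination x0^2*h1 + x1^2*h2 + 2*x0*x1*h3 + x0*h4 + x1*h5

set_option maxHeartbeats 1000000 in
/-- The orthogonal projections of the solid paraboloids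
`K₁ = {(x, y, z) : x² + y² ≤ z}` and `K₂ = {(x, y, z) : 2x² + y² ≤ z}` on every
2-dimensional plane of `ℝ³` are positively homothetic. -/
theorem paraboloid_projections_positively_homothetic
    (p : EuclideanSpace ℝ (Fin 3)) (L : Submodule ℝ (EuclideanSpace ℝ (Fin 3)))
    (hL : Module.finrank ℝ L = 2) :
    ∃ (w : EuclideanSpace ℝ (Fin 3)) (l : ℝ), 0 < l ∧
      planeProj p L '' {q : EuclideanSpace ℝ (Fin 3) | q 0 ^ 2 + q 1 ^ 2 ≤ q 2} =
        (fun x => w + l • x) ''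
          (planeProj p L '' {q : EuclideanSpace ℝ (Fin 3) | 2 * q 0 ^ 2 + q 1 ^ 2 ≤ q 2}) := by
  classical
  have h3 : Module.finrank ℝ (EuclideanSpace ℝ (Fin 3)) = 3 := by
    simp [finrank_euclideanSpace]
  have horth : Module.finrank ℝ Lᗮ = 1 := by
    have h := Submodule.finrank_add_finrank_orthogonal (K := L)
    rw [hL, h3] at h
    omega
  have hbot : Lᗮ ≠ ⊥ := by
    intro h
    rw [h] at horth
    simp at horth
  obtain ⟨u, huL, hune⟩ := (Submodule.ne_bot_iff _).mp hbot
  have hPu : (L.orthogonalProjection u : EuclideanSpace ℝ (Fin 3)) = 0 := by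
    rw [Submodule.orthogonalProjectionOnto_apply_of_mem_orthogonal huL]
    simp
  by_cases hdeg : u 0 = 0 ∧ u 1 = 0
  · -- degenerate case: L is the horizontal plane, both projections are all of p + L
    have hu2 : u 2 ≠ 0 := by
      intro h2
      apply hune
      ext i
      fin_cases i <;> simp [hdeg.1, hdeg.2, h2]
    have key : ∀ c : ℝ,
        planeProj p L '' {q : EuclideanSpace ℝ (Fin 3) | c * q 0 ^ 2 + q 1 ^ 2 ≤ q 2} =
          (fun m => p + m) '' (L : Set (EuclideanSpace ℝ (Fin 3))) := by
      intro c
      apply Set.Subset.antisymm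
      · rintro _ ⟨q, -, rfl⟩
        exact ⟨_, (L.orthogonalProjection (q - p)).2, rfl⟩
      · rintro _ ⟨m, hm, rfl⟩
        set t : ℝ := (c * (p 0 + m 0) ^ 2 + (p 1 + m 1) ^ 2 - p 2 - m 2) / u 2 with ht
        refine ⟨p + m + t • u, ?_, ?_⟩
        · show c * _ ^ 2 + _ ^ 2 ≤ _
          have e0 : (p + m + t • u) 0 = p 0 + m 0 := by
            simp [PiLp.add_apply, PiLp.smul_apply, hdeg.1]
          have e1 : (p + m + t • u) 1 = p 1 + m 1 := by
            simp [PiLp.add_apply, PiLp.smul_apply, hdeg.2]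
          have e2 : (p + m + t • u) 2 = p 2 + m 2 + t * u 2 := by
            simp [PiLp.add_apply, PiLp.smul_apply]
          rw [e0, e1, e2, ht, div_mul_cancel₀ _ hu2]
          ring_nf
          exact le_rfl
        · show p + _ = p + m
          congr 1
          have : p + m + t • u - p = m + t • u := by abel
          rw [this, map_add, map_smul]
          have hm' : (L.orthogonalProjection m : EuclideanSpace ℝ (Fin 3)) = m :=
            Submodule.starProjection_eq_self_iff.mpr hm
          push_cast
          rw [hm', hPu]
          simp
    have e1 : {q : EuclideanSpace ℝ (Fin 3) | q 0 ^ 2 + q 1 ^ 2 ≤ q 2} =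
        {q : EuclideanSpace ℝ (Fin 3) | (1:ℝ) * q 0 ^ 2 + q 1 ^ 2 ≤ q 2} := by
      ext q; simp
    refine ⟨0, 1, one_pos, ?_⟩
    rw [e1, key 1, key 2]
    ext a
    simp
  · -- main case
    have hA : 0 < 2 * (u 0) ^ 2 + (u 1) ^ 2 := by
      have h01 : u 0 ≠ 0 ∨ u 1 ≠ 0 := by tauto
      rcases h01 with h | h
      · have h0 : 0 < (u 0) ^ 2 := lt_of_le_of_ne (sq_nonneg _) (Ne.symm (pow_ne_zero 2 h))
        nlinarith [sq_nonneg (u 1)]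
      · have h0 : 0 < (u 1) ^ 2 := lt_of_le_of_ne (sq_nonneg _) (Ne.symm (pow_ne_zero 2 h))
        nlinarith [sq_nonneg (u 0)]
    obtain ⟨l, f1, f2, v1, v2, v3, s, hl, hsne, hsum, hid⟩ := Tident (u 0) (u 1) (u 2) hA
    set v : EuclideanSpace ℝ (Fin 3) := (WithLp.equiv 2 (Fin 3 → ℝ)).symm ![v1, v2, v3] with hv
    have hv0 : v 0 = v1 := by simp [hv, WithLp.equiv_symm_apply, PiLp.toLp_apply]
    have hv1 : v 1 = v2 := by simp [hv, WithLp.equiv_symm_apply, PiLp.toLp_apply]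
    have hv2 : v 2 = v3 := by simp [hv, WithLp.equiv_symm_apply, PiLp.toLp_apply]
    set fx : EuclideanSpace ℝ (Fin 3) → ℝ := fun x => f1 * x 0 + f2 * x 1 with hfx
    set T : EuclideanSpace ℝ (Fin 3) → EuclideanSpace ℝ (Fin 3) :=
      fun x => l • x + fx x • u + v with hT
    have hTdef : ∀ x : EuclideanSpace ℝ (Fin 3), T x = l • x + fx x • u + v :=
      fun _ => rfl
    have hTc : ∀ (x : EuclideanSpace ℝ (Fin 3)) (i : Fin 3),
        T x i = l * x i + fx x * u i + v i := by
      intro x i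
      simp [hT, PiLp.add_apply, PiLp.smul_apply]
    have hfxd : ∀ x : EuclideanSpace ℝ (Fin 3), fx x = f1 * x 0 + f2 * x 1 :=
      fun x => rfl
    have hfxsub : ∀ x y : EuclideanSpace ℝ (Fin 3), fx (x - y) = fx x - fx y := by
      intro x y
      rw [hfxd, hfxd, hfxd]
      simp [PiLp.sub_apply]
      ring
    clear_value T fx v
    have hfxu : fx u = s - l := by
      rw [hfxd]
      linarith [hsum]
    -- T maps K₂ into K₁
    have hmem : ∀ x : EuclideanSpace ℝ (Fin 3), 2 * x 0 ^ 2 + x 1 ^ 2 ≤ x 2 →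
        (T x) 0 ^ 2 + (T x) 1 ^ 2 ≤ (T x) 2 := by
      intro x hx
      have h := hid (x 0) (x 1) (x 2)
      rw [hTc x 0, hTc x 1, hTc x 2, hv0, hv1, hv2, hfxd]
      nlinarith [h]
    -- T is onto K₁ from K₂
    have hsurj : ∀ y : EuclideanSpace ℝ (Fin 3), y 0 ^ 2 + y 1 ^ 2 ≤ y 2 →
        ∃ x : EuclideanSpace ℝ (Fin 3), T x = y ∧ 2 * x 0 ^ 2 + x 1 ^ 2 ≤ x 2 := by
      intro y hy
      set c : ℝ := s⁻¹ * fx (y - v) with hc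
      set x : EuclideanSpace ℝ (Fin 3) := l⁻¹ • (y - v - c • u) with hx
      have hxc : ∀ i : Fin 3, x i = l⁻¹ * (y i - v i - c * u i) := by
        intro i
        simp [hx, PiLp.smul_apply, PiLp.sub_apply]
      have hfxx : fx x = c := by
        rw [hfxd]
        rw [hxc 0, hxc 1]
        have expand : f1 * (l⁻¹ * (y 0 - v 0 - c * u 0)) + f2 * (l⁻¹ * (y 1 - v 1 - c * u 1))
            = l⁻¹ * ((f1 * (y 0 - v 0) + f2 * (y 1 - v 1)) - c * (f1 * u 0 + f2 * u 1)) := by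
          ring
        rw [expand]
        have h1 : f1 * (y 0 - v 0) + f2 * (y 1 - v 1) = fx (y - v) := by
          rw [hfxd]
          simp [PiLp.sub_apply]
        have h2 : f1 * u 0 + f2 * u 1 = s - l := by linarith [hsum]
        rw [h1, h2, hc]
        field_simp
        ring
      have hTx : T x = y := by
        rw [hTdef, hfxx, hx]
        rw [smul_smul, mul_inv_cancel₀ (ne_of_gt hl), one_smul]
        abel
      refine ⟨x, hTx, ?_⟩
      clear_value x c
      have h := hid (x 0) (x 1) (x 2)
      have hTi : ∀ i : Fin 3, l * x i + (f1 * x 0 + f2 * x 1) * u i + v i = y i := by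
        intro i
        rw [← hTx, hTc x i, hfxd]
      have e0 := hTi 0
      have e1 := hTi 1
      have e2 := hTi 2
      rw [hv0] at e0
      rw [hv1] at e1
      rw [hv2] at e2
      rw [e0, e1, e2] at h
      have h6 : l * (2 * x 0 ^ 2 + x 1 ^ 2 - x 2) ≤ l * 0 := by
        rw [← h]
        rw [mul_zero]
        linarith [hy]
      have h7 := (mul_le_mul_iff_right₀ hl).mp h6
      linarith [h7]
    -- projection intertwines T with a homothety
    obtain ⟨w, hw⟩ : ∃ w : EuclideanSpace ℝ (Fin 3), w = (1 - l) • p +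
        (L.orthogonalProjection (v + (l - 1) • p) : EuclideanSpace ℝ (Fin 3)) :=
      ⟨_, rfl⟩
    have hproj : ∀ x : EuclideanSpace ℝ (Fin 3),
        planeProj p L (T x) = w + l • planeProj p L x := by
      intro x
      unfold planeProj
      have hdecomp : T x - p = l • (x - p) + fx x • u + (v + (l - 1) • p) := by
        rw [hTdef]
        module
      rw [hdecomp, map_add, map_add, map_smul, map_smul]
      push_cast
      rw [hPu]
      rw [hw]
      module
    refine ⟨w, l, hl, ?_⟩
    apply Set.Subset.antisymm
    · rintro _ ⟨q, hq, rfl⟩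
      obtain ⟨x, hTx, hx⟩ := hsurj q hq
      refine ⟨planeProj p L x, ⟨x, hx, rfl⟩, ?_⟩
      show w + l • planeProj p L x = planeProj p L q
      rw [← hproj x, hTx]
    · rintro _ ⟨_, ⟨x, hx, rfl⟩, rfl⟩
      refine ⟨T x, hmem x hx, ?_⟩
      show planeProj p L (T x) = w + l • planeProj p L x
      exact hproj x
end

section
/- Let K₁ and K₂ be compact convex sets in ℝⁿ (n ≥ 3), each with more than one point, such that for every hyperplane L of ℝⁿ the orthogonal projections π_L(K₁) and π_L(K₂) are homothetic. Let [x₁, z₁] be an exposed diameter of K₁ and let P₁, Q₁ be opposite closed halfspaces with K₁ ∩ P₁ = {x₁} and K₁ ∩ Q₁ = {z₁}. Then there exist an exposed diameter [x₂, z₂] of K₂ parallel to [x₁, z₁] and opposite closed halfspaces P₂ and Q₂ that are translates of P₁ and Q₁ respectively, such that K₂ ∩ P₂ = {x₂} and K₂ ∩ Q₂ = {z₂}. -/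
open scoped RealInnerProductSpace

/-- Nonempty sets `X₁` and `X₂` in `ℝⁿ` are *homothetic* provided
`X₁ = z + λ • X₂` for some point `z` and some scalar `λ ≠ 0`. -/
def Homothetic {n : ℕ} (X₁ X₂ : Set (EuclideanSpace ℝ (Fin n))) : Prop :=
  ∃ (z : EuclideanSpace ℝ (Fin n)) (l : ℝ), l ≠ 0 ∧ X₁ = (fun x => z + l • x) '' X₂

private lemma aux_exists_ge_finrank_eq {n : ℕ} :
    ∀ (k : ℕ), k ≤ n → ∀ (V : Submodule ℝ (EuclideanSpace ℝ (Fin n))),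
      Module.finrank ℝ V ≤ k →
      ∃ L : Submodule ℝ (EuclideanSpace ℝ (Fin n)), V ≤ L ∧ Module.finrank ℝ L = k := by
  intro k
  induction k with
  | zero =>
    intro _ V hV
    exact ⟨V, le_rfl, Nat.le_zero.mp hV⟩
  | succ k ih =>
    intro hkn V hV
    rcases eq_or_lt_of_le hV with h | h
    · exact ⟨V, le_rfl, h⟩
    · obtain ⟨L, hVL, hL⟩ := ih (Nat.le_of_succ_le hkn) V (Nat.lt_succ_iff.mp h)
      have hLne : L ≠ ⊤ := by
        intro ht
        rw [ht, finrank_top, finrank_euclideanSpace_fin] at hL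
        omega
      obtain ⟨x, hx⟩ : ∃ x, x ∉ L := by
        by_contra hco
        push_neg at hco
        exact hLne (Submodule.eq_top_iff'.mpr hco)
      refine ⟨L ⊔ Submodule.span ℝ {x}, le_trans hVL le_sup_left, ?_⟩
      have hx0 : x ≠ 0 := fun h0 => hx (h0 ▸ L.zero_mem)
      have hinf : L ⊓ Submodule.span ℝ {x} = ⊥ := by
        rw [Submodule.eq_bot_iff]
        rintro y ⟨hyL, hysp⟩
        obtain ⟨r, rfl⟩ := Submodule.mem_span_singleton.mp hysp
        rcases eq_or_ne r 0 with rfl | hr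
        · simp
        · exact absurd (by simpa [hr, smul_smul] using L.smul_mem r⁻¹ hyL) hx
      have := Submodule.finrank_sup_add_finrank_inf_eq L (Submodule.span ℝ {x})
      rw [hinf, hL, finrank_span_singleton hx0] at this
      simpa using this

private lemma aux_inner_planeProj {n : ℕ} {L : Submodule ℝ (EuclideanSpace ℝ (Fin n))}
    {g : EuclideanSpace ℝ (Fin n)} (hgL : g ∈ L) (y : EuclideanSpace ℝ (Fin n)) :
    ⟪g, planeProj 0 L y⟫ = ⟪g, y⟫ := by
  simp only [planeProj, sub_zero, zero_add]
  rw [← Submodule.starProjection_apply, ← Submodule.inner_starProjection_left_eq_right,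
    Submodule.starProjection_eq_self_iff.mpr hgL]

private lemma aux_planeProj_sub {n : ℕ} (L : Submodule ℝ (EuclideanSpace ℝ (Fin n)))
    (a b : EuclideanSpace ℝ (Fin n)) :
    planeProj 0 L a - planeProj 0 L b =
      (Submodule.orthogonalProjection L (a - b) : EuclideanSpace ℝ (Fin n)) := by
  simp only [planeProj, sub_zero, zero_add, ← Submodule.coe_sub, ← map_sub]

/-- Core transfer lemma: through any hyperplane `L` containing `g`, the (projected)
exposed diameter of `K₁` is a nonzero multiple of the difference of any extremizers
of `⟪g, ·⟫` on `K₂`. -/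
private lemma aux_core {n : ℕ}
    (K₁ K₂ : Set (EuclideanSpace ℝ (Fin n)))
    (x₁ z₁ g : EuclideanSpace ℝ (Fin n)) (α β : ℝ) (hβα : β < α)
    (hP₁ : K₁ ∩ {y | α ≤ ⟪g, y⟫} = {x₁}) (hQ₁ : K₁ ∩ {y | ⟪g, y⟫ ≤ β} = {z₁})
    (L : Submodule ℝ (EuclideanSpace ℝ (Fin n))) (hgL : g ∈ L)
    (hom : Homothetic (planeProj 0 L '' K₁) (planeProj 0 L '' K₂)) :
    ∃ c : ℝ, c ≠ 0 ∧ ∀ a ∈ K₂, ∀ b ∈ K₂,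
      (∀ y ∈ K₂, ⟪g, y⟫ ≤ ⟪g, a⟫) → (∀ y ∈ K₂, ⟪g, b⟫ ≤ ⟪g, y⟫) →
      planeProj 0 L x₁ - planeProj 0 L z₁ =
        c • (planeProj 0 L a - planeProj 0 L b) := by
  have hx₁ : x₁ ∈ K₁ ∩ {y | α ≤ ⟪g, y⟫} := by rw [hP₁]; rfl
  have hz₁ : z₁ ∈ K₁ ∩ {y | ⟪g, y⟫ ≤ β} := by rw [hQ₁]; rfl
  have humax : ∀ y ∈ K₁, ⟪g, x₁⟫ ≤ ⟪g, y⟫ → y = x₁ := by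
    intro y hy h
    have : y ∈ K₁ ∩ {y | α ≤ ⟪g, y⟫} := ⟨hy, le_trans hx₁.2 h⟩
    rwa [hP₁] at this
  have humin : ∀ y ∈ K₁, ⟪g, y⟫ ≤ ⟪g, z₁⟫ → y = z₁ := by
    intro y hy h
    have : y ∈ K₁ ∩ {y | ⟪g, y⟫ ≤ β} := ⟨hy, le_trans h hz₁.2⟩
    rwa [hQ₁] at this
  have hmax : ∀ y ∈ K₁, ⟪g, y⟫ ≤ ⟪g, x₁⟫ := by
    intro y hy
    rcases le_or_gt α ⟪g, y⟫ with h | h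
    · have : y ∈ K₁ ∩ {y | α ≤ ⟪g, y⟫} := ⟨hy, h⟩
      rw [hP₁] at this; rw [this]
    · exact le_trans h.le hx₁.2
  have hmin : ∀ y ∈ K₁, ⟪g, z₁⟫ ≤ ⟪g, y⟫ := by
    intro y hy
    rcases le_or_gt ⟪g, y⟫ β with h | h
    · have : y ∈ K₁ ∩ {y | ⟪g, y⟫ ≤ β} := ⟨hy, h⟩
      rw [hQ₁] at this; rw [this]
    · exact le_trans hz₁.2 h.le
  -- unique maximizer / minimizer of ⟪g,·⟫ on planeProj 0 L '' K₁
  have hπmax : ∀ m ∈ planeProj 0 L '' K₁, (∀ y ∈ planeProj 0 L '' K₁, ⟪g, y⟫ ≤ ⟪g, m⟫) → m = planeProj 0 L x₁ := by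
    rintro m ⟨y, hy, rfl⟩ hm
    have h1 : ⟪g, planeProj 0 L x₁⟫ ≤ ⟪g, planeProj 0 L y⟫ := hm _ (Set.mem_image_of_mem _ hx₁.1)
    rw [aux_inner_planeProj hgL, aux_inner_planeProj hgL] at h1
    rw [humax y hy h1]
  have hπmin : ∀ m ∈ planeProj 0 L '' K₁, (∀ y ∈ planeProj 0 L '' K₁, ⟪g, m⟫ ≤ ⟪g, y⟫) → m = planeProj 0 L z₁ := by
    rintro m ⟨y, hy, rfl⟩ hm
    have h1 : ⟪g, planeProj 0 L y⟫ ≤ ⟪g, planeProj 0 L z₁⟫ := hm _ (Set.mem_image_of_mem _ hz₁.1)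
    rw [aux_inner_planeProj hgL, aux_inner_planeProj hgL] at h1
    rw [humin y hy h1]
  obtain ⟨zz, l, hl, heq⟩ := hom
  rcases hl.lt_or_gt with hneg | hpos
  · -- l < 0 : maximizers of K₂ go to the minimizer of planeProj 0 L '' K₁
    refine ⟨-l, by simpa using hl, ?_⟩
    intro a ha b hb hamax hbmin
    have hmem : ∀ y ∈ K₂, zz + l • planeProj 0 L y ∈ planeProj 0 L '' K₁ := by
      intro y hy
      rw [heq]
      exact Set.mem_image_of_mem _ (Set.mem_image_of_mem _ hy)
    have hval : ∀ m ∈ planeProj 0 L '' K₁, ∃ y ∈ K₂, m = zz + l • planeProj 0 L y := by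
      intro m hm
      rw [heq] at hm
      obtain ⟨x, ⟨y, hy, rfl⟩, rfl⟩ := hm
      exact ⟨y, hy, rfl⟩
    have ha' : zz + l • planeProj 0 L a = planeProj 0 L z₁ := by
      refine hπmin _ (hmem a ha) ?_
      intro m hm
      obtain ⟨y, hy, rfl⟩ := hval m hm
      simp only [inner_add_right, real_inner_smul_right, aux_inner_planeProj hgL]
      have := hamax y hy
      nlinarith
    have hb' : zz + l • planeProj 0 L b = planeProj 0 L x₁ := by
      refine hπmax _ (hmem b hb) ?_
      intro m hm
      obtain ⟨y, hy, rfl⟩ := hval m hm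
      simp only [inner_add_right, real_inner_smul_right, aux_inner_planeProj hgL]
      have := hbmin y hy
      nlinarith
    rw [← ha', ← hb']
    module
  · -- l > 0
    refine ⟨l, hl, ?_⟩
    intro a ha b hb hamax hbmin
    have hmem : ∀ y ∈ K₂, zz + l • planeProj 0 L y ∈ planeProj 0 L '' K₁ := by
      intro y hy
      rw [heq]
      exact Set.mem_image_of_mem _ (Set.mem_image_of_mem _ hy)
    have hval : ∀ m ∈ planeProj 0 L '' K₁, ∃ y ∈ K₂, m = zz + l • planeProj 0 L y := by
      intro m hm
      rw [heq] at hm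
      obtain ⟨x, ⟨y, hy, rfl⟩, rfl⟩ := hm
      exact ⟨y, hy, rfl⟩
    have ha' : zz + l • planeProj 0 L a = planeProj 0 L x₁ := by
      refine hπmax _ (hmem a ha) ?_
      intro m hm
      obtain ⟨y, hy, rfl⟩ := hval m hm
      simp only [inner_add_right, real_inner_smul_right, aux_inner_planeProj hgL]
      have := hamax y hy
      nlinarith
    have hb' : zz + l • planeProj 0 L b = planeProj 0 L z₁ := by
      refine hπmin _ (hmem b hb) ?_
      intro m hm
      obtain ⟨y, hy, rfl⟩ := hval m hm
      simp only [inner_add_right, real_inner_smul_right, aux_inner_planeProj hgL]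
      have := hbmin y hy
      nlinarith
    rw [← ha', ← hb']
    module

/-- Suppose the compact convex sets `K₁, K₂ ⊆ ℝⁿ` (`n ≥ 3`), each with more than one
point, have homothetic projections on every hyperplane.  If `[x₁, z₁]` is an exposed
diameter of `K₁`, exposed by the pair of disjoint opposite closed halfspaces
`P₁ = {y : α ≤ ⟪g, y⟫}` and `Q₁ = {y : ⟪g, y⟫ ≤ β}` (so `K₁ ∩ P₁ = {x₁}` and
`K₁ ∩ Q₁ = {z₁}`), then there are an exposed diameter `[x₂, z₂]` of `K₂` parallel to
`[x₁, z₁]` and translates `P₂ = {y : α' ≤ ⟪g, y⟫}`, `Q₂ = {y : ⟪g, y⟫ ≤ β'}` of `P₁`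
and `Q₁` with `K₂ ∩ P₂ = {x₂}` and `K₂ ∩ Q₂ = {z₂}`. -/
theorem exists_parallel_exposed_diameter
    (n : ℕ) (hn : 3 ≤ n)
    (K₁ K₂ : Set (EuclideanSpace ℝ (Fin n)))
    (hc₁ : IsCompact K₁) (hc₂ : IsCompact K₂)
    (hcv₁ : Convex ℝ K₁) (hcv₂ : Convex ℝ K₂)
    (hpts₁ : ∃ a ∈ K₁, ∃ b ∈ K₁, a ≠ b) (hpts₂ : ∃ a ∈ K₂, ∃ b ∈ K₂, a ≠ b)
    (hproj : ∀ (p : EuclideanSpace ℝ (Fin n)) (L : Submodule ℝ (EuclideanSpace ℝ (Fin n))),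
      Module.finrank ℝ L = n - 1 →
      Homothetic (planeProj p L '' K₁) (planeProj p L '' K₂))
    (x₁ z₁ : EuclideanSpace ℝ (Fin n)) (g : EuclideanSpace ℝ (Fin n)) (α β : ℝ)
    (hg : ‖g‖ = 1) (hβα : β < α)
    (hP₁ : K₁ ∩ {y | α ≤ ⟪g, y⟫} = {x₁}) (hQ₁ : K₁ ∩ {y | ⟪g, y⟫ ≤ β} = {z₁}) :
    ∃ (x₂ z₂ : EuclideanSpace ℝ (Fin n)) (α' β' : ℝ), β' ≤ α' ∧
      K₂ ∩ {y | α' ≤ ⟪g, y⟫} = {x₂} ∧ K₂ ∩ {y | ⟪g, y⟫ ≤ β'} = {z₂} ∧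
      ∃ c : ℝ, c ≠ 0 ∧ x₂ - z₂ = c • (x₁ - z₁) := by
  classical
  have hx₁ : x₁ ∈ K₁ ∩ {y | α ≤ ⟪g, y⟫} := by rw [hP₁]; rfl
  have hz₁ : z₁ ∈ K₁ ∩ {y | ⟪g, y⟫ ≤ β} := by rw [hQ₁]; rfl
  obtain ⟨a₀, ha₀, b₀, hb₀, hab₀⟩ := hpts₂
  have hcont : Continuous fun y : EuclideanSpace ℝ (Fin n) => ⟪g, y⟫ :=
    Continuous.inner continuous_const continuous_id
  obtain ⟨x₂, hx₂K, hx₂max'⟩ := hc₂.exists_isMaxOn ⟨a₀, ha₀⟩ hcont.continuousOn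
  obtain ⟨z₂, hz₂K, hz₂min'⟩ := hc₂.exists_isMinOn ⟨a₀, ha₀⟩ hcont.continuousOn
  have hx₂max : ∀ y ∈ K₂, ⟪g, y⟫ ≤ ⟪g, x₂⟫ := fun y hy => isMaxOn_iff.mp hx₂max' y hy
  have hz₂min : ∀ y ∈ K₂, ⟪g, z₂⟫ ≤ ⟪g, y⟫ := fun y hy => isMinOn_iff.mp hz₂min' y hy
  -- for every vector v there is a hyperplane containing g and v, with the core conclusion
  have key : ∀ v : EuclideanSpace ℝ (Fin n),
      ∃ (L : Submodule ℝ (EuclideanSpace ℝ (Fin n))), g ∈ L ∧ v ∈ L ∧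
        ∃ c : ℝ, c ≠ 0 ∧ ∀ a ∈ K₂, ∀ b ∈ K₂,
          (∀ y ∈ K₂, ⟪g, y⟫ ≤ ⟪g, a⟫) → (∀ y ∈ K₂, ⟪g, b⟫ ≤ ⟪g, y⟫) →
          planeProj 0 L x₁ - planeProj 0 L z₁ =
            c • (planeProj 0 L a - planeProj 0 L b) := by
    intro v
    set V := Submodule.span ℝ {g} ⊔ Submodule.span ℝ {v} with hV
    have hVr : Module.finrank ℝ V ≤ n - 1 := by
      have h1 : Module.finrank ℝ (Submodule.span ℝ {g}) ≤ 1 := by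
        simpa using finrank_span_le_card ({g} : Set (EuclideanSpace ℝ (Fin n)))
      have h2 : Module.finrank ℝ (Submodule.span ℝ {v}) ≤ 1 := by
        simpa using finrank_span_le_card ({v} : Set (EuclideanSpace ℝ (Fin n)))
      have h3 := Submodule.finrank_sup_add_finrank_inf_eq
        (Submodule.span ℝ {g}) (Submodule.span ℝ {v})
      rw [← hV] at h3
      omega
    obtain ⟨L, hVL, hLr⟩ := aux_exists_ge_finrank_eq (n - 1) (by omega) V hVr
    have hgL : g ∈ L := hVL ((le_sup_left : Submodule.span ℝ {g} ≤ V)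
      (Submodule.mem_span_singleton_self g))
    have hvL : v ∈ L := hVL ((le_sup_right : Submodule.span ℝ {v} ≤ V)
      (Submodule.mem_span_singleton_self v))
    exact ⟨L, hgL, hvL, aux_core K₁ K₂ x₁ z₁ g α β hβα hP₁ hQ₁ L hgL (hproj 0 L hLr)⟩
  -- the "projection equality" turned into an equality about orthogonal projections
  have keyc : ∀ v : EuclideanSpace ℝ (Fin n), ∀ a ∈ K₂, ∀ b ∈ K₂,
      (∀ y ∈ K₂, ⟪g, y⟫ ≤ ⟪g, a⟫) → (∀ y ∈ K₂, ⟪g, b⟫ ≤ ⟪g, y⟫) →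
      ∃ (L : Submodule ℝ (EuclideanSpace ℝ (Fin n))), g ∈ L ∧ v ∈ L ∧
        ∃ c : ℝ, c ≠ 0 ∧
          (Submodule.orthogonalProjection L (x₁ - z₁) : EuclideanSpace ℝ (Fin n)) =
            c • (Submodule.orthogonalProjection L (a - b) : EuclideanSpace ℝ (Fin n)) ∧
          ⟪g, x₁ - z₁⟫ = c * ⟪g, a - b⟫ := by
    intro v a ha b hb hmax hmin
    obtain ⟨L, hgL, hvL, c, hc, hcore⟩ := key v
    have h := hcore a ha b hb hmax hmin
    rw [aux_planeProj_sub, aux_planeProj_sub] at h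
    refine ⟨L, hgL, hvL, c, hc, h, ?_⟩
    have := congrArg (fun w => ⟪g, w⟫) h
    simpa only [real_inner_smul_right,
      ← Submodule.starProjection_apply, ← Submodule.inner_starProjection_left_eq_right,
      Submodule.starProjection_eq_self_iff.mpr hgL] using this
  have hgu : 0 < ⟪g, x₁ - z₁⟫ := by
    rw [inner_sub_right]
    have hh1 : α ≤ ⟪g, x₁⟫ := hx₁.2
    have hh2 : ⟪g, z₁⟫ ≤ β := hz₁.2
    linarith
  -- the gap of K₂ is positive
  have hgw : 0 < ⟪g, x₂ - z₂⟫ := by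
    obtain ⟨L, _, _, c, hc, _, hinner⟩ :=
      keyc 0 x₂ hx₂K z₂ hz₂K hx₂max hz₂min
    rcases lt_or_ge 0 ⟪g, x₂ - z₂⟫ with h | h
    · exact h
    have h0 : ⟪g, x₂ - z₂⟫ = 0 := by
      rw [inner_sub_right]
      have := hz₂min x₂ hx₂K
      have := hx₂max z₂ hz₂K
      rw [inner_sub_right] at h
      linarith
    rw [h0, mul_zero] at hinner
    linarith
  -- uniqueness of the maximizer
  have huniqmax : ∀ y ∈ K₂, ⟪g, x₂⟫ ≤ ⟪g, y⟫ → y = x₂ := by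
    intro y hy hge
    have hymax : ∀ w ∈ K₂, ⟪g, w⟫ ≤ ⟪g, y⟫ := fun w hw => le_trans (hx₂max w hw) hge
    obtain ⟨L, hgL, hvL, c, hc, hcore⟩ := key (y - x₂)
    have h1 := hcore y hy z₂ hz₂K hymax hz₂min
    have h2 := hcore x₂ hx₂K z₂ hz₂K hx₂max hz₂min
    have h3 : c • (planeProj 0 L y - planeProj 0 L z₂) =
        c • (planeProj 0 L x₂ - planeProj 0 L z₂) := by rw [← h1, ← h2]
    have h4 := smul_right_injective (EuclideanSpace ℝ (Fin n)) hc h3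
    have h5 : planeProj 0 L y - planeProj 0 L x₂ = 0 :=
      sub_eq_zero.mpr (sub_left_inj.mp h4)
    rw [aux_planeProj_sub, ← Submodule.starProjection_apply,
      Submodule.starProjection_eq_self_iff.mpr hvL] at h5
    exact sub_eq_zero.mp h5
  -- uniqueness of the minimizer
  have huniqmin : ∀ y ∈ K₂, ⟪g, y⟫ ≤ ⟪g, z₂⟫ → y = z₂ := by
    intro y hy hle
    have hymin : ∀ w ∈ K₂, ⟪g, y⟫ ≤ ⟪g, w⟫ := fun w hw => le_trans hle (hz₂min w hw)
    obtain ⟨L, hgL, hvL, c, hc, hcore⟩ := key (y - z₂)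
    have h1 := hcore x₂ hx₂K y hy hx₂max hymin
    have h2 := hcore x₂ hx₂K z₂ hz₂K hx₂max hz₂min
    have h3 : c • (planeProj 0 L x₂ - planeProj 0 L y) =
        c • (planeProj 0 L x₂ - planeProj 0 L z₂) := by rw [← h1, ← h2]
    have h4 := smul_right_injective (EuclideanSpace ℝ (Fin n)) hc h3
    have h5 : planeProj 0 L y - planeProj 0 L z₂ = 0 :=
      sub_eq_zero.mpr (sub_right_inj.mp h4)
    rw [aux_planeProj_sub, ← Submodule.starProjection_apply,
      Submodule.starProjection_eq_self_iff.mpr hvL] at h5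
    exact sub_eq_zero.mp h5
  -- parallelism
  set c₀ : ℝ := ⟪g, x₁ - z₁⟫ / ⟪g, x₂ - z₂⟫ with hc₀def
  have hc₀pos : 0 < c₀ := div_pos hgu hgw
  have hpar : x₁ - z₁ = c₀ • (x₂ - z₂) := by
    obtain ⟨L, hgL, hvL, c, hc, hproj', hinner⟩ :=
      keyc (x₁ - z₁ - c₀ • (x₂ - z₂)) x₂ hx₂K z₂ hz₂K hx₂max hz₂min
    have hcc₀ : c = c₀ := by
      rw [hc₀def, hinner, mul_div_assoc, div_self (ne_of_gt hgw), mul_one]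
    have hz : (Submodule.orthogonalProjection L (x₁ - z₁ - c₀ • (x₂ - z₂)) : EuclideanSpace ℝ (Fin n))
        = 0 := by
      rw [← hcc₀, map_sub, map_smul, Submodule.coe_sub, Submodule.coe_smul, hproj', sub_self]
    rw [← Submodule.starProjection_apply, Submodule.starProjection_eq_self_iff.mpr hvL] at hz
    exact sub_eq_zero.mp hz
  refine ⟨x₂, z₂, ⟪g, x₂⟫, ⟪g, z₂⟫, ?_, ?_, ?_, c₀⁻¹, inv_ne_zero (ne_of_gt hc₀pos), ?_⟩
  · exact hx₂max z₂ hz₂K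
  · ext y
    constructor
    · rintro ⟨hy, hge⟩
      exact huniqmax y hy hge
    · rintro rfl
      exact ⟨hx₂K, show (⟪g, y⟫ : ℝ) ≤ ⟪g, y⟫ from le_rfl⟩
  · ext y
    constructor
    · rintro ⟨hy, hle⟩
      exact huniqmin y hy hle
    · rintro rfl
      exact ⟨hz₂K, show (⟪g, y⟫ : ℝ) ≤ ⟪g, y⟫ from le_rfl⟩
  · rw [hpar, smul_smul, inv_mul_cancel₀ (ne_of_gt hc₀pos), one_smul]
end
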